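/- The index [L : ℤω] of the cyclic subgroup generated by ω in L equals the absolute value of the integer (2−t)·∏_{i=1}^t p_i + Σ_{i=1}^t ∏_{j≠i} p_j (which equals p_1⋯p_t·χ, where χ := 2 − Σ_{i=1}^t (1 − 1/p_i) is the orbifold Euler characteristic); here an index value of 0 on the right-hand side corresponds to ℤω having infinite index, which happens exactly when χ = 0. In particular ±[L : ℤω] = p_1⋯p_t·χ whenever χ ≠ 0. -/

import Mathlib

open scoped BigOperators


/-- Index of the additive subgroup underlying a full-rank submodule of `ℤ^t`
given by a basis indexed by `Fin t`. -/
lemma aux_index_eq_det_natAbs {t : ℕ} (N : Submodule ℤ (Fin t → ℤ))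
    (bN : Module.Basis (Fin t) ℤ N) :
    N.toAddSubgroup.index =
      ((Pi.basisFun ℤ (Fin t)).det (fun i => (bN i : Fin t → ℤ))).natAbs := by
  classical
  obtain ⟨n, snf⟩ := N.smithNormalForm (Pi.basisFun ℤ (Fin t))
  obtain rfl : t = n := by
    have e := bN.indexEquiv snf.bN
    simpa using Fintype.card_congr e
  have hidx : N.toAddSubgroup.index = ∏ i, (snf.a i).natAbs := by
    rw [snf.toAddSubgroup_index_eq_pow_mul_prod]
    simp [Ideal.span_singleton_toAddSubgroup_eq_zmultiples, Int.index_zmultiples]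
  rcases snf with ⟨bM, bN2, f, a, ha⟩
  dsimp only at hidx ⊢
  have hb : Function.Bijective f := Finite.injective_iff_bijective.mp f.injective
  let σ : Equiv.Perm (Fin t) := Equiv.ofBijective f hb
  let bM2 : Module.Basis (Fin t) ℤ (Fin t → ℤ) := bM.reindex σ.symm
  have hbM2 : ∀ i, (bN2 i : Fin t → ℤ) = a i • bM2 i := by
    intro i
    rw [ha i]
    simp [bM2, σ, Equiv.ofBijective_apply]
  set b0 := Pi.basisFun ℤ (Fin t) with hb0
  -- the two determinants are associated
  have hassoc : (b0.det fun i => (bN i : Fin t → ℤ)).natAbs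
      = (b0.det fun i => (bN2 i : Fin t → ℤ)).natAbs := by
    have h1 : (fun i => (bN i : Fin t → ℤ)) = N.subtype ∘ bN := rfl
    have h2 : (fun i => (bN2 i : Fin t → ℤ)) = N.subtype ∘ bN2 := rfl
    rw [h1, h2, Module.Basis.det_comp_basis, Module.Basis.det_comp_basis]
    exact Int.natAbs_eq_iff_associated.mpr
      (LinearMap.associated_det_comp_equiv _ _ _)
  rw [hassoc, hidx]
  -- compute det of the smith basis
  have hmat : bM2.toMatrix (fun i => (bN2 i : Fin t → ℤ)) = Matrix.diagonal a := by
    ext i j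
    rw [Module.Basis.toMatrix_apply, hbM2 j]
    simp only [map_smul, Module.Basis.repr_self]
    by_cases h : i = j
    · subst h; simp [Matrix.diagonal]
    · simp [Matrix.diagonal, h, Finsupp.single_eq_of_ne (Ne.symm h)]
  have hsplit : b0.toMatrix (fun i => (bN2 i : Fin t → ℤ))
      = b0.toMatrix bM2 * bM2.toMatrix (fun i => (bN2 i : Fin t → ℤ)) :=
    (Module.Basis.toMatrix_mul_toMatrix _ _ _).symm
  rw [Module.Basis.det_apply, hsplit, Matrix.det_mul, hmat, Matrix.det_diagonal,
    Int.natAbs_mul]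
  have hunit : (b0.toMatrix bM2).det.natAbs = 1 := by
    rw [← Module.Basis.det_apply]
    exact Int.isUnit_iff_natAbs_eq.mp (b0.isUnit_det bM2)
  rw [hunit, one_mul]
  exact (map_prod Int.natAbsHom a Finset.univ).symm

/-- The index of the subgroup of `ℤ^t` spanned by the rows of a square matrix is the
absolute value of its determinant (`0` meaning infinite index). -/
lemma aux_index_span_range (t : ℕ) (v : Fin t → (Fin t → ℤ)) :
    (Submodule.span ℤ (Set.range v)).toAddSubgroup.index = (Matrix.of v).det.natAbs := by
  classical
  by_cases hdet : (Matrix.of v).det = 0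
  · rw [hdet]
    by_contra h
    rw [Int.natAbs_zero] at h
    obtain ⟨c, hc0, hc⟩ := Matrix.exists_mulVec_eq_zero_iff.mpr hdet
    set N := (Submodule.span ℤ (Set.range v)).toAddSubgroup with hN
    have hfin : Finite ((Fin t → ℤ) ⧸ N) := by
      have := h
      rw [AddSubgroup.index] at this
      exact Nat.finite_of_card_ne_zero this
    -- linear functional vanishing on the span
    let φ : (Fin t → ℤ) →ₗ[ℤ] ℤ := ∑ j, c j • (LinearMap.proj j)
    have hφ : ∀ y, φ y = ∑ j, c j * y j := by
      intro y; simp [φ]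
    have hker : ∀ x ∈ Submodule.span ℤ (Set.range v), φ x = 0 := by
      intro x hx
      have : Submodule.span ℤ (Set.range v) ≤ LinearMap.ker φ := by
        rw [Submodule.span_le]
        rintro _ ⟨i, rfl⟩
        have := congrFun hc i
        simp only [Matrix.mulVec, dotProduct, Pi.zero_apply] at this
        simp only [SetLike.mem_coe, LinearMap.mem_ker, hφ]
        rw [← this]
        apply Finset.sum_congr rfl
        intro j _
        rw [Matrix.of_apply, mul_comm]
      exact this hx
    -- every coordinate of c is zero: contradiction
    apply hc0
    funext j
    set x : (Fin t → ℤ) ⧸ N := QuotientAddGroup.mk (Pi.single j 1) with hx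
    have hord : addOrderOf x ≠ 0 := (addOrderOf_pos x).ne'
    have hmem : (addOrderOf x : ℤ) • (Pi.single j (1:ℤ)) ∈ N := by
      have h1 : addOrderOf x • x = 0 := addOrderOf_nsmul_eq_zero x
      have h2 : addOrderOf x • x = QuotientAddGroup.mk (addOrderOf x • Pi.single j (1:ℤ)) := rfl
      rw [h2] at h1
      rw [QuotientAddGroup.eq_zero_iff] at h1
      simpa using h1
    have := hker _ hmem
    rw [map_smul, smul_eq_mul] at this
    have hφx : φ (Pi.single j (1:ℤ)) = c j := by
      simp [hφ, Pi.single_apply]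
    rw [hφx] at this
    have : c j = 0 := by
      rcases mul_eq_zero.mp this with h' | h'
      · exact absurd (Int.natCast_eq_zero.mp h') hord
      · exact h'
    simpa using this
  · have li : LinearIndependent ℤ v := by
      rw [Fintype.linearIndependent_iff]
      intro g hg
      by_contra hgg
      push_neg at hgg
      obtain ⟨i, hi⟩ := hgg
      apply hdet
      rw [← Matrix.exists_vecMul_eq_zero_iff]
      refine ⟨g, fun h0 => hi (by rw [h0]; rfl), ?_⟩
      funext j
      have := congrFun hg j
      simp only [Matrix.vecMul, dotProduct, Pi.zero_apply]
      simpa [Finset.sum_apply] using this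
    let bN : Module.Basis (Fin t) ℤ (Submodule.span ℤ (Set.range v)) := Module.Basis.span li
    rw [aux_index_eq_det_natAbs _ bN]
    congr 1
    rw [Module.Basis.det_apply]
    have : (Pi.basisFun ℤ (Fin t)).toMatrix (fun i => (bN i : Fin t → ℤ))
        = (Matrix.of v).transpose := by
      ext i j
      rw [Module.Basis.toMatrix_apply]
      simp [bN, Module.Basis.span_apply, Pi.basisFun_repr, Matrix.transpose_apply]
    rw [this, Matrix.det_transpose]

/-- Determinant of the relation matrix. -/
lemma aux_det_relmat (n : ℕ) (p : Fin (n + 1) → ℕ) (hp : ∀ i, p i ≠ 0) :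
    (Matrix.of fun i j : Fin (n + 1) =>
        (if i = 0 then ((n : ℤ) - 1) * (p 0 : ℤ) * (if j = 0 then 1 else 0) - 1
         else (p i : ℤ) * (if i = j then 1 else 0)
           - (p 0 : ℤ) * (if j = 0 then 1 else 0))).det
      = -((2 - ((n + 1 : ℕ) : ℤ)) * ∏ i, (p i : ℤ) +
          ∑ i : Fin (n + 1), ∏ j ∈ Finset.univ.erase i, (p j : ℤ)) := by
  classical
  have hpq : ∀ i, (p i : ℚ) ≠ 0 := fun i => Nat.cast_ne_zero.mpr (hp i)
  rw [← @Int.cast_inj ℚ]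
  -- move to ℚ
  set Aq : Matrix (Fin (n + 1)) (Fin (n + 1)) ℚ := Matrix.of fun i j =>
      (if i = 0 then ((n : ℚ) - 1) * (p 0 : ℚ) * (if j = 0 then 1 else 0) - 1
       else (p i : ℚ) * (if i = j then 1 else 0)
         - (p 0 : ℚ) * (if j = 0 then 1 else 0)) with hAq
  have hcast : ((Matrix.of fun i j : Fin (n + 1) =>
        (if i = 0 then ((n : ℤ) - 1) * (p 0 : ℤ) * (if j = 0 then 1 else 0) - 1
         else (p i : ℤ) * (if i = j then 1 else 0)
           - (p 0 : ℤ) * (if j = 0 then 1 else 0))).det : ℚ) = Aq.det := by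
    rw [show ((Int.cast : ℤ → ℚ) = (Int.castRingHom ℚ : ℤ → ℚ)) from rfl, RingHom.map_det]
    congr 1
    ext i j
    by_cases h1 : i = 0 <;> by_cases h2 : j = 0 <;>
      simp [hAq, h1, h2, Matrix.map_apply]
  rw [hcast]
  -- column operation: add p0/pi times column i to column 0
  set cc : Fin (n + 1) → ℚ := fun i => if i = 0 then 1 else (p 0 : ℚ) / (p i : ℚ) with hcc
  set B := Matrix.updateCol Aq 0 (fun k => ∑ i, cc i • Aq k i) with hB
  have hdetB : B.det = Aq.det := by
    rw [hB, Matrix.det_updateCol_sum Aq 0 cc]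
    simp [hcc]
  have hB0 : ∀ m : Fin n, B m.succ 0 = 0 := by
    intro m
    rw [hB, Matrix.updateCol_self]
    rw [Fin.sum_univ_succ]
    have h1 : Aq m.succ 0 = -(p 0 : ℚ) := by
      simp [hAq, Fin.succ_ne_zero m]
    have h2 : ∀ i : Fin n, cc i.succ • Aq m.succ i.succ
        = if i = m then (p 0 : ℚ) else 0 := by
      intro i
      have hAe : Aq m.succ i.succ = (p m.succ : ℚ) * (if m.succ = i.succ then 1 else 0) := by
        rw [hAq]
        simp only [Matrix.of_apply, if_neg (Fin.succ_ne_zero m), if_neg (Fin.succ_ne_zero i),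
          mul_zero, sub_zero]
      have hce : cc i.succ = (p 0 : ℚ) / (p i.succ : ℚ) := by
        rw [hcc]; simp [Fin.succ_ne_zero i]
      rw [hAe, hce, smul_eq_mul]
      by_cases h : i = m
      · subst h
        rw [if_pos rfl, if_pos rfl, mul_one, div_mul_cancel₀ _ (hpq i.succ)]
      · rw [if_neg (fun hc => h (Fin.succ_injective _ hc).symm), if_neg h, mul_zero, mul_zero]
    rw [Finset.sum_congr rfl (fun i _ => h2 i), Finset.sum_ite_eq' Finset.univ m]
    simp [h1, hcc]
  have hB00 : B 0 0 = ((n : ℚ) - 1) * (p 0 : ℚ) - 1 - ∑ i : Fin n, (p 0 : ℚ) / (p i.succ : ℚ) := by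
    rw [hB, Matrix.updateCol_self, Fin.sum_univ_succ]
    have h1 : Aq 0 0 = ((n : ℚ) - 1) * (p 0 : ℚ) - 1 := by simp [hAq]
    have h2 : ∀ i : Fin n, Aq 0 i.succ = -1 := by
      intro i
      rw [hAq]
      simp only [Matrix.of_apply, if_pos rfl, if_neg (Fin.succ_ne_zero i), mul_zero, zero_sub]
      simp
    have hc0 : cc 0 = (1 : ℚ) := by rw [hcc]; simp
    have hcs : ∀ i : Fin n, cc i.succ = (p 0 : ℚ) / (p i.succ : ℚ) := by
      intro i; rw [hcc]; simp [Fin.succ_ne_zero i]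
    rw [hc0, h1, one_smul,
      Finset.sum_congr rfl (fun i _ => by rw [hcs i, h2 i, smul_eq_mul, mul_neg_one])]
    rw [Finset.sum_neg_distrib]
    ring
  have hsub : B.submatrix (Fin.succAbove 0) Fin.succ
      = Matrix.diagonal (fun k : Fin n => (p k.succ : ℚ)) := by
    ext k l
    rw [Matrix.submatrix_apply, Fin.succAbove_zero]
    have : B k.succ l.succ = Aq k.succ l.succ := by
      rw [hB, Matrix.updateCol_ne (Fin.succ_ne_zero l)]
    rw [this]
    by_cases h : k = l
    · subst h; simp [hAq, Fin.succ_ne_zero k]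
    · have hne : k.succ ≠ l.succ := fun hc => h (Fin.succ_injective _ hc)
      rw [hAq]
      simp only [Matrix.of_apply, if_neg (Fin.succ_ne_zero k), if_neg hne,
        if_neg (Fin.succ_ne_zero l), mul_zero, sub_zero, Matrix.diagonal_apply_ne _ h]
  have hQdet : Aq.det
      = (((n : ℚ) - 1) * (p 0 : ℚ) - 1 - ∑ i : Fin n, (p 0 : ℚ) / (p i.succ : ℚ))
        * ∏ i : Fin n, (p i.succ : ℚ) := by
    rw [← hdetB, Matrix.det_succ_column_zero]
    rw [Finset.sum_eq_single 0]
    · rw [hB00, hsub, Matrix.det_diagonal]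
      simp
    · intro i _ hi
      obtain ⟨m, rfl⟩ := Fin.exists_succ_eq.mpr hi
      rw [hB0 m, mul_zero, zero_mul]
    · simp
  rw [hQdet]
  push_cast
  -- rewrite the erase products
  have hQ0 : ∏ j ∈ Finset.univ.erase (0 : Fin (n + 1)), (p j : ℚ)
      = ∏ i : Fin n, (p i.succ : ℚ) := by
    apply mul_left_cancel₀ (hpq 0)
    rw [Finset.mul_prod_erase Finset.univ (fun j : Fin (n + 1) => (p j : ℚ))
      (Finset.mem_univ 0), Fin.prod_univ_succ (f := fun i : Fin (n + 1) => (p i : ℚ))]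
  have hQk : ∀ k : Fin n, ∏ j ∈ Finset.univ.erase k.succ, (p j : ℚ)
      = (p 0 : ℚ) * ∏ j ∈ Finset.univ.erase k, (p j.succ : ℚ) := by
    intro k
    apply mul_left_cancel₀ (hpq k.succ)
    rw [Finset.mul_prod_erase Finset.univ (fun j : Fin (n + 1) => (p j : ℚ))
        (Finset.mem_univ k.succ),
      Fin.prod_univ_succ (f := fun i : Fin (n + 1) => (p i : ℚ)),
      ← Finset.mul_prod_erase Finset.univ (fun j : Fin n => (p j.succ : ℚ)) (Finset.mem_univ k)]
    ring
  have hterm : ∀ i : Fin n, (p 0 : ℚ) / (p i.succ : ℚ) * ∏ k : Fin n, (p k.succ : ℚ)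
      = (p 0 : ℚ) * ∏ j ∈ Finset.univ.erase i, (p j.succ : ℚ) := by
    intro i
    rw [← Finset.mul_prod_erase Finset.univ (fun j : Fin n => (p j.succ : ℚ))
      (Finset.mem_univ i), ← mul_assoc, div_mul_cancel₀ _ (hpq i.succ)]
  rw [Fin.sum_univ_succ (f := fun i : Fin (n + 1) => ∏ j ∈ Finset.univ.erase i, (p j : ℚ))]
  rw [hQ0, Finset.sum_congr rfl (fun k _ => hQk k)]
  rw [Fin.prod_univ_succ (f := fun i : Fin (n + 1) => (p i : ℚ))]
  rw [sub_mul, sub_mul, Finset.sum_mul, Finset.sum_congr rfl (fun i _ => hterm i)]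
  ring


/-- The rank-one abelian group `L(p)`: the quotient of the free abelian group `ℤ^t`
on generators `e 0, …, e (t-1)` by the subgroup generated by the elements
`p i • e i - p 0 • e 0`. -/
abbrev LGrp (t : ℕ) (ht : 0 < t) (p : Fin t → ℕ) : Type :=
  (Fin t → ℤ) ⧸ AddSubgroup.closure
    (Set.range fun i : Fin t =>
      (p i : ℤ) • Pi.single i (1 : ℤ) - (p ⟨0, ht⟩ : ℤ) • Pi.single ⟨0, ht⟩ (1 : ℤ))

/-- The image `x i` of the generator `e i` in `L(p)`. -/
def xgen (t : ℕ) (ht : 0 < t) (p : Fin t → ℕ) (i : Fin t) : LGrp t ht p :=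
  QuotientAddGroup.mk (Pi.single i 1)

/-- The canonical element `c = p 0 • x 0` of `L(p)`. -/
def cElem (t : ℕ) (ht : 0 < t) (p : Fin t → ℕ) : LGrp t ht p :=
  (p ⟨0, ht⟩ : ℤ) • xgen t ht p ⟨0, ht⟩

/-- The dualizing element `ω = (t - 2) • c - (x 0 + ⋯ + x (t-1))` of `L(p)`. -/
def omegaElem (t : ℕ) (ht : 0 < t) (p : Fin t → ℕ) : LGrp t ht p :=
  ((t : ℤ) - 2) • cElem t ht p - ∑ i, xgen t ht p i

/-- The positive cone `L₊ = {a 0 • x 0 + ⋯ + a (t-1) • x (t-1) : a i ∈ ℕ}`;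
`x ≤ y` means `y - x ∈ L₊`. -/
def posCone (t : ℕ) (ht : 0 < t) (p : Fin t → ℕ) : Set (LGrp t ht p) :=
  { y | ∃ a : Fin t → ℕ, y = ∑ i, (a i : ℤ) • xgen t ht p i }

/-- the index `[L : ℤω]` equals the absolute value of
`(2 - t) ∏ p i + Σ_i ∏_{j ≠ i} p j` (which is `p_1 ⋯ p_t · χ`), where an index `0`
means infinite index (the case `χ = 0`). -/
theorem index_zmultiples_omega
    (t : ℕ) (ht : 0 < t) (p : Fin t → ℕ) (hp : ∀ i, 2 ≤ p i) :
    (AddSubgroup.zmultiples (omegaElem t ht p)).index =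
      ((2 - (t : ℤ)) * ∏ i, (p i : ℤ) +
        ∑ i : Fin t, ∏ j ∈ Finset.univ.erase i, (p j : ℤ)).natAbs := by
  classical
  obtain ⟨n, rfl⟩ : ∃ n, t = n + 1 := ⟨t - 1, (Nat.succ_pred_eq_of_pos ht).symm⟩
  set fval : Fin (n + 1) → (Fin (n + 1) → ℤ) := fun i =>
      (p i : ℤ) • Pi.single i (1 : ℤ) - (p 0 : ℤ) • Pi.single (0 : Fin (n + 1)) (1 : ℤ)
    with hfval
  set S : AddSubgroup (Fin (n + 1) → ℤ) := AddSubgroup.closure (Set.range fval) with hS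
  set w : Fin (n + 1) → ℤ :=
      (((n + 1 : ℕ) : ℤ) - 2) • ((p 0 : ℤ) • Pi.single (0 : Fin (n + 1)) (1 : ℤ))
        - ∑ i, Pi.single i (1 : ℤ) with hw
  set g : Fin (n + 1) → (Fin (n + 1) → ℤ) := fun i => if i = 0 then w else fval i with hg
  -- ω is the image of w
  have hωw : omegaElem (n + 1) ht p = QuotientAddGroup.mk' S w := by
    rw [hw, map_sub, map_sum, map_zsmul, map_zsmul]
    rfl
  -- reduce the index computation to ℤ^t
  rw [hωw]
  change (AddSubgroup.zmultiples ((QuotientAddGroup.mk' S) w : (Fin (n + 1) → ℤ) ⧸ S)).index = _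
  rw [← AddSubgroup.index_comap_of_surjective _ (QuotientAddGroup.mk'_surjective S)]
  have hcomap : (AddSubgroup.zmultiples ((QuotientAddGroup.mk' S) w)).comap
      (QuotientAddGroup.mk' S) = (Submodule.span ℤ (Set.range g)).toAddSubgroup := by
    rw [← AddMonoidHom.map_zmultiples, AddSubgroup.comap_map_eq, QuotientAddGroup.ker_mk',
      Submodule.span_int_eq_addSubgroupClosure, AddSubgroup.zmultiples_eq_closure, hS,
      ← AddSubgroup.closure_union]
    apply le_antisymm
    · apply AddSubgroup.closure_le .. |>.mpr
      rintro x (hx | ⟨i, rfl⟩)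
      · rw [Set.mem_singleton_iff] at hx
        subst hx
        apply AddSubgroup.subset_closure
        exact ⟨0, by simp [hg]⟩
      · by_cases hi : i = 0
        · subst hi
          have hzero : fval 0 = 0 := by rw [hfval]; simp
          rw [hzero]
          exact AddSubgroup.zero_mem _
        · apply AddSubgroup.subset_closure
          exact ⟨i, by simp only [hg]; exact if_neg hi⟩
    · apply AddSubgroup.closure_le .. |>.mpr
      rintro x ⟨i, rfl⟩
      by_cases hi : i = 0
      · subst hi
        apply AddSubgroup.subset_closure
        left
        simp only [hg, if_pos rfl, Set.mem_singleton_iff]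
      · apply AddSubgroup.subset_closure
        right
        exact ⟨i, by simp only [hg]; exact (if_neg hi).symm⟩
  rw [hcomap, aux_index_span_range]
  have hg_eq : Matrix.of g = Matrix.of fun i j : Fin (n + 1) =>
      (if i = 0 then ((n : ℤ) - 1) * (p 0 : ℤ) * (if j = 0 then 1 else 0) - 1
       else (p i : ℤ) * (if i = j then 1 else 0)
         - (p 0 : ℤ) * (if j = 0 then 1 else 0)) := by
    ext i j
    rw [Matrix.of_apply, Matrix.of_apply]
    simp only [hg]
    by_cases hi : i = 0
    · subst hi
      rw [if_pos rfl, if_pos rfl, hw]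
      simp only [Pi.sub_apply, Pi.smul_apply, Finset.sum_apply, smul_eq_mul, Pi.single_apply]
      have hsum : (∑ k : Fin (n + 1), if j = k then (1 : ℤ) else 0) = 1 := by simp
      rw [hsum]
      have hn : ((n + 1 : ℕ) : ℤ) - 2 = (n : ℤ) - 1 := by push_cast; ring
      rw [hn]
      by_cases hj : j = 0
      · subst hj; simp
      · simp [hj]
    · rw [if_neg hi, if_neg hi, hfval]
      simp only [Pi.sub_apply, Pi.smul_apply, smul_eq_mul, Pi.single_apply]
      by_cases hj : j = i
      · subst hj
        have : ¬(j = 0) := fun h => hi h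
        simp [this]
      · have hij : ¬ i = j := fun h => hj h.symm
        simp [hj, hij]
  rw [hg_eq, aux_det_relmat n p (fun i => by have := hp i; omega), Int.natAbs_neg]
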